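/- Let d ≥ 1 and n ≥ 1 be integers, let z_1, …, z_n and y_1, …, y_n be points in ℝ^d, and let λ > 0. Define g : ℝ^n → ℝ by g(w) = (2/n²) Σ_{i=1}^n Σ_{k=1}^n w_i ‖z_i − y_k‖ − (1/n²) Σ_{i=1}^n Σ_{k=1}^n w_i w_k ‖z_i − z_k‖ − (1/n²) Σ_{i=1}^n Σ_{k=1}^n ‖y_i − y_k‖ + (λ/n²) Σ_{i=1}^n w_i². Then g attains its minimum over the simplex Δ = {w ∈ ℝ^n : w_i ≥ 0 for all i, and Σ_{i=1}^n w_i = n} at exactly one point; that is, the penalized energy balancing weights exist and are unique. -/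

import Mathlib

open scoped BigOperators
open Finset MeasureTheory Set

lemma aux_inner_pow_psd {n d m : ℕ} (z : Fin n → EuclideanSpace ℝ (Fin d)) (b : Fin n → ℝ) :
    0 ≤ ∑ i, ∑ k, b i * b k * (∑ j, z i j * z k j) ^ m := by
  classical
  have hpow : ∀ i k : Fin n, (∑ j, z i j * z k j) ^ m
      = ∑ p ∈ Fintype.piFinset (fun _ : Fin m => (Finset.univ : Finset (Fin d))),
          (∏ t, z i (p t)) * (∏ t, z k (p t)) := by
    intro i k
    calc (∑ j, z i j * z k j) ^ m
        = ∏ _t : Fin m, (∑ j, z i j * z k j) := by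
          rw [Finset.prod_const, Finset.card_univ, Fintype.card_fin]
      _ = ∑ p ∈ Fintype.piFinset (fun _ : Fin m => (Finset.univ : Finset (Fin d))),
            ∏ t, (z i (p t) * z k (p t)) := Finset.prod_univ_sum _ _
      _ = _ := Finset.sum_congr rfl fun p _ => by rw [Finset.prod_mul_distrib]
  have key : ∑ i, ∑ k, b i * b k * (∑ j, z i j * z k j) ^ m
      = ∑ p ∈ Fintype.piFinset (fun _ : Fin m => (Finset.univ : Finset (Fin d))),
          (∑ i, b i * ∏ t, z i (p t)) ^ 2 :=
    calc ∑ i, ∑ k, b i * b k * (∑ j, z i j * z k j) ^ m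
        = ∑ i, ∑ k, ∑ p ∈ Fintype.piFinset (fun _ : Fin m => (Finset.univ : Finset (Fin d))),
            (b i * ∏ t, z i (p t)) * (b k * ∏ t, z k (p t)) := by
          refine Finset.sum_congr rfl fun i _ => Finset.sum_congr rfl fun k _ => ?_
          rw [hpow, Finset.mul_sum]
          exact Finset.sum_congr rfl fun p _ => by ring
      _ = ∑ i, ∑ p ∈ Fintype.piFinset (fun _ : Fin m => (Finset.univ : Finset (Fin d))),
            ∑ k, (b i * ∏ t, z i (p t)) * (b k * ∏ t, z k (p t)) :=
          Finset.sum_congr rfl fun i _ => Finset.sum_comm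
      _ = ∑ p ∈ Fintype.piFinset (fun _ : Fin m => (Finset.univ : Finset (Fin d))),
            ∑ i, ∑ k, (b i * ∏ t, z i (p t)) * (b k * ∏ t, z k (p t)) := Finset.sum_comm
      _ = _ := Finset.sum_congr rfl fun p _ => by rw [sq, Finset.sum_mul_sum]
  rw [key]
  exact Finset.sum_nonneg fun p _ => sq_nonneg _

lemma aux_gauss_psd {n d : ℕ} (z : Fin n → EuclideanSpace ℝ (Fin d)) (c : Fin n → ℝ) {s : ℝ}
    (hs : 0 ≤ s) :
    0 ≤ ∑ i, ∑ k, c i * c k * Real.exp (-(‖z i - z k‖ ^ 2 * s)) := by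
  classical
  set b : Fin n → ℝ := fun i => c i * Real.exp (-(‖z i‖ ^ 2 * s)) with hb
  have hsumm : ∀ (x c0 : ℝ), Summable (fun m : ℕ => c0 * ((2 * s) ^ m / m.factorial * x ^ m)) := by
    intro x c0
    refine ((Real.summable_pow_div_factorial (2 * s * x)).mul_left c0).congr fun m => ?_
    rw [mul_pow]; ring
  have hexp : ∀ x : ℝ, Real.exp ((2 * s) * x) = ∑' m : ℕ, ((2 * s) ^ m / m.factorial * x ^ m) := by
    intro x
    rw [Real.exp_eq_exp_ℝ, NormedSpace.exp_eq_tsum_div]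
    exact tsum_congr fun m => by rw [mul_pow]; ring
  have hterm : ∀ i k : Fin n, c i * c k * Real.exp (-(‖z i - z k‖ ^ 2 * s))
      = ∑' m : ℕ, b i * b k * ((2 * s) ^ m / m.factorial * (∑ j, z i j * z k j) ^ m) := by
    intro i k
    have hip : (inner ℝ (z i) (z k) : ℝ) = ∑ j, z i j * z k j := by
      simp [PiLp.inner_apply, RCLike.inner_apply, conj_trivial, mul_comm]
    have h1 : (-(‖z i - z k‖ ^ 2 * s))
        = -(‖z i‖ ^ 2 * s) + -(‖z k‖ ^ 2 * s) + (2 * s) * ∑ j, z i j * z k j := by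
      rw [norm_sub_sq_real, hip]; ring
    rw [h1, Real.exp_add, Real.exp_add, hexp, ← tsum_mul_left, ← tsum_mul_left]
    exact tsum_congr fun m => by simp only [hb]; ring
  have hswap : ∑ i, ∑ k, c i * c k * Real.exp (-(‖z i - z k‖ ^ 2 * s))
      = ∑' m : ℕ, ∑ i, ∑ k, b i * b k * ((2 * s) ^ m / m.factorial * (∑ j, z i j * z k j) ^ m) := by
    rw [Summable.tsum_finsetSum fun i _ => summable_sum fun k _ => hsumm _ _]
    refine Finset.sum_congr rfl fun i _ => ?_
    rw [Summable.tsum_finsetSum fun k _ => hsumm _ _]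
    exact Finset.sum_congr rfl fun k _ => hterm i k
  rw [hswap]
  refine tsum_nonneg fun m => ?_
  have : ∑ i, ∑ k, b i * b k * ((2 * s) ^ m / m.factorial * (∑ j, z i j * z k j) ^ m)
      = (2 * s) ^ m / m.factorial * ∑ i, ∑ k, b i * b k * (∑ j, z i j * z k j) ^ m := by
    rw [Finset.mul_sum]
    refine Finset.sum_congr rfl fun i _ => ?_
    rw [Finset.mul_sum]
    exact Finset.sum_congr rfl fun k _ => by ring
  rw [this]
  exact mul_nonneg (div_nonneg (pow_nonneg (by linarith) _) (Nat.cast_nonneg _))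
    (aux_inner_pow_psd z b)

lemma aux_psi_integrable {t : ℝ} (ht : 0 ≤ t) :
    IntegrableOn (fun s : ℝ => (1 - Real.exp (-(t * s))) * s ^ (-(3:ℝ)/2)) (Ioi 0) := by
  have hmeas : Measurable (fun s : ℝ => (1 - Real.exp (-(t * s))) * s ^ (-(3:ℝ)/2)) := by
    have h1 : Measurable (fun s : ℝ => s ^ (-(3:ℝ)/2)) := by measurability
    exact (measurable_const.sub ((measurable_id.const_mul t).neg.exp)).mul h1
  have hnn : ∀ s : ℝ, 0 < s → 0 ≤ (1 - Real.exp (-(t * s))) * s ^ (-(3:ℝ)/2) := by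
    intro s hs
    refine mul_nonneg ?_ (Real.rpow_nonneg hs.le _)
    have : Real.exp (-(t * s)) ≤ 1 := by
      rw [Real.exp_le_one_iff]
      simp [mul_nonneg ht hs.le]
    linarith
  rw [← Ioc_union_Ioi_eq_Ioi (zero_le_one (α := ℝ)), integrableOn_union]
  constructor
  · have hint : IntegrableOn (fun s : ℝ => t * s ^ (-(1:ℝ)/2)) (Ioc 0 1) := by
      apply Integrable.const_mul
      exact (integrableOn_Ioc_iff_integrableOn_Ioo (f := fun s : ℝ => s ^ (-(1:ℝ)/2)) (by simp)).2
        ((intervalIntegral.integrableOn_Ioo_rpow_iff one_pos).2 (by norm_num))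
    refine Integrable.mono hint hmeas.aestronglyMeasurable.restrict ?_
    filter_upwards [ae_restrict_mem measurableSet_Ioc] with s hs
    have hs0 : 0 < s := hs.1
    have hbound : 1 - Real.exp (-(t * s)) ≤ t * s := by
      nlinarith [Real.add_one_le_exp (-(t * s))]
    rw [Real.norm_eq_abs, Real.norm_eq_abs,
      abs_of_nonneg (hnn s hs0),
      abs_of_nonneg (mul_nonneg ht (Real.rpow_nonneg hs0.le _))]
    have hrw : s ^ (-(1:ℝ)/2) = s * s ^ (-(3:ℝ)/2) := by
      rw [show (-(1:ℝ)/2) = 1 + (-(3:ℝ)/2) by norm_num, Real.rpow_add hs0, Real.rpow_one]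
    calc (1 - Real.exp (-(t * s))) * s ^ (-(3:ℝ)/2)
        ≤ (t * s) * s ^ (-(3:ℝ)/2) :=
          mul_le_mul_of_nonneg_right hbound (Real.rpow_nonneg hs0.le _)
      _ = t * s ^ (-(1:ℝ)/2) := by rw [hrw]; ring
  · refine Integrable.mono (integrableOn_Ioi_rpow_of_lt (by norm_num : (-(3:ℝ)/2) < -1) one_pos)
      hmeas.aestronglyMeasurable.restrict ?_
    filter_upwards [ae_restrict_mem measurableSet_Ioi] with s hs
    have hs0 : (0:ℝ) < s := lt_trans one_pos hs
    rw [Real.norm_eq_abs, Real.norm_eq_abs, abs_of_nonneg (hnn s hs0),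
      abs_of_nonneg (Real.rpow_nonneg hs0.le _)]
    have : Real.exp (-(t * s)) ≥ 0 := (Real.exp_pos _).le
    nlinarith [Real.rpow_nonneg hs0.le (-(3:ℝ)/2)]

noncomputable def auxC : ℝ := ∫ s in Ioi (0:ℝ), (1 - Real.exp (-s)) * s ^ (-(3:ℝ)/2)

lemma auxC_int : IntegrableOn (fun s : ℝ => (1 - Real.exp (-s)) * s ^ (-(3:ℝ)/2)) (Ioi 0) := by
  have := aux_psi_integrable (zero_le_one (α := ℝ))
  simpa using this

lemma auxC_pos : 0 < auxC := by
  set φ : ℝ → ℝ := fun s => (1 - Real.exp (-s)) * s ^ (-(3:ℝ)/2) with hφ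
  have hnn : ∀ s : ℝ, 0 < s → 0 ≤ φ s := by
    intro s hs
    refine mul_nonneg ?_ (Real.rpow_nonneg hs.le _)
    have : Real.exp (-s) ≤ 1 := by rw [Real.exp_le_one_iff]; linarith
    linarith
  set ε : ℝ := (1 - Real.exp (-1)) * 2 ^ (-(3:ℝ)/2) with hε
  have hεpos : 0 < ε := by
    refine mul_pos ?_ (Real.rpow_pos_of_pos two_pos _)
    have : Real.exp (-1) < 1 := Real.exp_lt_one_iff.2 (by norm_num)
    linarith
  have hlow : ∀ s ∈ Ioc (1:ℝ) 2, ε ≤ φ s := by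
    intro s hs
    have h1 : Real.exp (-s) ≤ Real.exp (-1) := Real.exp_le_exp.2 (by linarith [hs.1])
    have h2 : (2:ℝ) ^ (-(3:ℝ)/2) ≤ s ^ (-(3:ℝ)/2) :=
      Real.rpow_le_rpow_of_nonpos (by linarith [hs.1]) hs.2 (by norm_num)
    have h3 : (0:ℝ) ≤ 1 - Real.exp (-1) := by
      have : Real.exp (-1) < 1 := Real.exp_lt_one_iff.2 (by norm_num)
      linarith
    calc ε = (1 - Real.exp (-1)) * 2 ^ (-(3:ℝ)/2) := rfl
      _ ≤ (1 - Real.exp (-s)) * s ^ (-(3:ℝ)/2) := by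
          refine mul_le_mul (by linarith) h2 (Real.rpow_nonneg (by norm_num) _) (by linarith)
      _ = φ s := rfl
  have hI12 : IntegrableOn φ (Ioc 1 2) :=
    auxC_int.mono_set (fun x hx => lt_trans one_pos hx.1)
  have hge : ε * (volume (Ioc (1:ℝ) 2)).toReal ≤ ∫ s in Ioc (1:ℝ) 2, φ s :=
    by have := setIntegral_ge_of_const_le_real measurableSet_Ioc (by simp) hlow hI12; exact this
  have hvol : (volume (Ioc (1:ℝ) 2)).toReal = 1 := by
    rw [Real.volume_Ioc]
    norm_num
  have hmono : ∫ s in Ioc (1:ℝ) 2, φ s ≤ ∫ s in Ioi (0:ℝ), φ s := by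
    refine setIntegral_mono_set auxC_int ?_ (HasSubset.Subset.eventuallyLE ?_)
    · filter_upwards [ae_restrict_mem measurableSet_Ioi] with s hs using hnn s hs
    · intro x hx
      exact lt_trans one_pos hx.1
  have : 0 < ∫ s in Ioc (1:ℝ) 2, φ s := by
    calc (0:ℝ) < ε * 1 := by simpa using hεpos
      _ = ε * (volume (Ioc (1:ℝ) 2)).toReal := by rw [hvol]
      _ ≤ _ := hge
  calc (0:ℝ) < ∫ s in Ioc (1:ℝ) 2, φ s := this
    _ ≤ auxC := hmono

lemma aux_sqrt_eq {t : ℝ} (ht : 0 ≤ t) :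
    Real.sqrt t * auxC = ∫ s in Ioi (0:ℝ), (1 - Real.exp (-(t * s))) * s ^ (-(3:ℝ)/2) := by
  rcases eq_or_lt_of_le ht with h0 | h0
  · simp [← h0]
  · have key : EqOn (fun s : ℝ => (1 - Real.exp (-(t * s))) * s ^ (-(3:ℝ)/2))
        (fun s : ℝ => t ^ ((3:ℝ)/2) * ((1 - Real.exp (-(t * s))) * (t * s) ^ (-(3:ℝ)/2)))
        (Ioi 0) := by
      intro s hs
      have hs0 : (0:ℝ) < s := hs
      have h2 : t ^ ((3:ℝ)/2) * t ^ (-(3:ℝ)/2) = 1 := by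
        rw [← Real.rpow_add h0]; norm_num
      simp only
      rw [Real.mul_rpow h0.le hs0.le]
      linear_combination (-((1 - Real.exp (-(t * s))) * s ^ (-(3:ℝ)/2))) * h2
    rw [setIntegral_congr_fun measurableSet_Ioi key, integral_const_mul,
      integral_comp_mul_left_Ioi (fun x => (1 - Real.exp (-x)) * x ^ (-(3:ℝ)/2)) 0 h0]
    have hsq : t ^ ((3:ℝ)/2) * t⁻¹ = Real.sqrt t := by
      rw [← Real.rpow_neg_one t, ← Real.rpow_add h0, Real.sqrt_eq_rpow]
      norm_num
    rw [mul_zero, smul_eq_mul]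
    calc Real.sqrt t * auxC = t ^ ((3:ℝ)/2) * t⁻¹ * auxC := by rw [hsq]
      _ = t ^ ((3:ℝ)/2) * (t⁻¹ * auxC) := by ring
      _ = _ := rfl

/-- Conditional negative definiteness of the Euclidean distance kernel. -/
lemma aux_cnd {n d : ℕ} (z : Fin n → EuclideanSpace ℝ (Fin d)) (u : Fin n → ℝ)
    (hu : ∑ i, u i = 0) : ∑ i, ∑ k, u i * u k * ‖z i - z k‖ ≤ 0 := by
  classical
  set ψ : Fin n → Fin n → ℝ → ℝ :=
    fun i k s => u i * u k * ((1 - Real.exp (-(‖z i - z k‖ ^ 2 * s))) * s ^ (-(3:ℝ)/2)) with hψ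
  have hψint : ∀ i k : Fin n, IntegrableOn (ψ i k) (Ioi 0) :=
    fun i k => (aux_psi_integrable (sq_nonneg ‖z i - z k‖)).const_mul _
  have key : (∑ i, ∑ k, u i * u k * ‖z i - z k‖) * auxC
      = ∫ s in Ioi (0:ℝ), ∑ i, ∑ k, ψ i k s := by
    rw [integral_finset_sum _ fun i _ => integrable_finset_sum _ fun k _ => hψint i k]
    rw [Finset.sum_mul]
    refine Finset.sum_congr rfl fun i _ => ?_
    rw [integral_finset_sum _ fun k _ => hψint i k, Finset.sum_mul]
    refine Finset.sum_congr rfl fun k _ => ?_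
    have h1 : ‖z i - z k‖ = Real.sqrt (‖z i - z k‖ ^ 2) := (Real.sqrt_sq (norm_nonneg _)).symm
    rw [show u i * u k * ‖z i - z k‖ * auxC
        = u i * u k * (Real.sqrt (‖z i - z k‖ ^ 2) * auxC) by rw [← h1]; ring,
      aux_sqrt_eq (sq_nonneg _), ← integral_const_mul]
  have hneg : ∀ s ∈ Ioi (0:ℝ), ∑ i, ∑ k, ψ i k s ≤ 0 := by
    intro s hs
    have hs0 : (0:ℝ) < s := hs
    have hsplit : ∀ F G : Fin n → Fin n → ℝ,
        ∑ i, ∑ k, (F i k - G i k) = ∑ i, ∑ k, F i k - ∑ i, ∑ k, G i k := by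
      intro F G
      rw [← Finset.sum_sub_distrib]
      exact Finset.sum_congr rfl fun i _ => by rw [Finset.sum_sub_distrib]
    have h00 : ∑ i, ∑ k, u i * u k * s ^ (-(3:ℝ)/2) = 0 := by
      have : ∑ i, ∑ k, u i * u k * s ^ (-(3:ℝ)/2)
          = (∑ i, u i) * ((∑ k, u k) * s ^ (-(3:ℝ)/2)) := by
        rw [Finset.sum_mul]
        refine Finset.sum_congr rfl fun i _ => ?_
        rw [Finset.sum_mul, Finset.mul_sum]
        exact Finset.sum_congr rfl fun k _ => by ring
      rw [this, hu, zero_mul]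
    have hpull : ∀ F : Fin n → Fin n → ℝ, ∀ c : ℝ,
        ∑ i, ∑ k, F i k * c = (∑ i, ∑ k, F i k) * c := by
      intro F c
      rw [Finset.sum_mul]
      exact Finset.sum_congr rfl fun i _ => by rw [Finset.sum_mul]
    have hexpand : ∑ i, ∑ k, ψ i k s
        = 0 - (∑ i, ∑ k, u i * u k * Real.exp (-(‖z i - z k‖ ^ 2 * s))) * s ^ (-(3:ℝ)/2) :=
      calc ∑ i, ∑ k, ψ i k s
          = ∑ i, ∑ k, (u i * u k * s ^ (-(3:ℝ)/2)
              - (u i * u k * Real.exp (-(‖z i - z k‖ ^ 2 * s))) * s ^ (-(3:ℝ)/2)) :=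
            Finset.sum_congr rfl fun i _ => Finset.sum_congr rfl fun k _ => by
              simp only [hψ]; ring
        _ = ∑ i, ∑ k, u i * u k * s ^ (-(3:ℝ)/2)
              - ∑ i, ∑ k, (u i * u k * Real.exp (-(‖z i - z k‖ ^ 2 * s))) * s ^ (-(3:ℝ)/2) :=
            hsplit _ _
        _ = 0 - (∑ i, ∑ k, u i * u k * Real.exp (-(‖z i - z k‖ ^ 2 * s))) * s ^ (-(3:ℝ)/2) := by
            rw [h00, hpull]
    rw [hexpand]
    have h1 := aux_gauss_psd z u hs0.le
    have h2 : (0:ℝ) ≤ s ^ (-(3:ℝ)/2) := Real.rpow_nonneg hs0.le _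
    nlinarith
  have hle : (∑ i, ∑ k, u i * u k * ‖z i - z k‖) * auxC ≤ 0 := by
    rw [key]
    exact setIntegral_nonpos measurableSet_Ioi hneg
  by_contra hcon
  push_neg at hcon
  nlinarith [auxC_pos]

/-- The penalized energy balancing weights exist and are unique: the penalized
weighted energy distance attains its minimum over the simplex
`{w : ∀ i, 0 ≤ w i, ∑ i, w i = n}` at exactly one point. -/
theorem penalized_energy_balancing_weights_exist_unique (d n : ℕ)
    (hd : 1 ≤ d) (hn : 1 ≤ n)
    (z y : Fin n → EuclideanSpace ℝ (Fin d)) (lam : ℝ) (hlam : 0 < lam)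
    (g : (Fin n → ℝ) → ℝ)
    (hg : ∀ w : Fin n → ℝ,
      g w = (2 / (n : ℝ) ^ 2) * ∑ i, ∑ k, w i * ‖z i - y k‖ -
        (1 / (n : ℝ) ^ 2) * ∑ i, ∑ k, w i * w k * ‖z i - z k‖ -
        (1 / (n : ℝ) ^ 2) * ∑ i, ∑ k, ‖y i - y k‖ +
        (lam / (n : ℝ) ^ 2) * ∑ i, (w i) ^ 2) :
    ∃! w : Fin n → ℝ,
      (∀ i, 0 ≤ w i) ∧ (∑ i, w i = (n : ℝ)) ∧
        ∀ v : Fin n → ℝ, (∀ i, 0 ≤ v i) → (∑ i, v i = (n : ℝ)) → g w ≤ g v := by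
  classical
  have hn0 : (0:ℝ) < (n:ℝ) := by exact_mod_cast hn
  have hn2 : (0:ℝ) < (n:ℝ)^2 := by positivity
  -- strict midpoint convexity
  have hstrict : ∀ w v : Fin n → ℝ, (∑ i, w i = (n:ℝ)) → (∑ i, v i = (n:ℝ)) → w ≠ v →
      0 < g w + g v - 2 * g (fun i => (w i + v i) / 2) := by
    intro w v hw2 hv2 hne
    set m : Fin n → ℝ := fun i => (w i + v i) / 2 with hm
    set u : Fin n → ℝ := fun i => w i - v i with hu
    have hu0 : ∑ i, u i = 0 := by
      simp only [hu, Finset.sum_sub_distrib, hw2, hv2, sub_self]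
    have hD : ∑ i, ∑ k, u i * u k * ‖z i - z k‖ ≤ 0 := aux_cnd z u hu0
    have hP : 0 < ∑ i, u i ^ 2 := by
      obtain ⟨i, hi⟩ := Function.ne_iff.1 hne
      refine Finset.sum_pos' (fun j _ => sq_nonneg _) ⟨i, Finset.mem_univ i, ?_⟩
      have hui : u i ≠ 0 := sub_ne_zero.2 hi
      exact lt_of_le_of_ne (sq_nonneg _) (Ne.symm (pow_ne_zero 2 hui))
    have h1 : ∑ i, ∑ k, m i * ‖z i - y k‖
        = (1/2) * (∑ i, ∑ k, w i * ‖z i - y k‖) + (1/2) * (∑ i, ∑ k, v i * ‖z i - y k‖) := by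
      rw [Finset.mul_sum, Finset.mul_sum, ← Finset.sum_add_distrib]
      refine Finset.sum_congr rfl fun i _ => ?_
      rw [Finset.mul_sum, Finset.mul_sum, ← Finset.sum_add_distrib]
      exact Finset.sum_congr rfl fun k _ => by simp only [hm]; ring
    have h2 : ∑ i, ∑ k, m i * m k * ‖z i - z k‖
        = (1/2) * (∑ i, ∑ k, w i * w k * ‖z i - z k‖)
          + (1/2) * (∑ i, ∑ k, v i * v k * ‖z i - z k‖)
          - (1/4) * (∑ i, ∑ k, u i * u k * ‖z i - z k‖) := by
      rw [Finset.mul_sum, Finset.mul_sum, Finset.mul_sum, ← Finset.sum_add_distrib,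
        ← Finset.sum_sub_distrib]
      refine Finset.sum_congr rfl fun i _ => ?_
      rw [Finset.mul_sum, Finset.mul_sum, Finset.mul_sum, ← Finset.sum_add_distrib,
        ← Finset.sum_sub_distrib]
      exact Finset.sum_congr rfl fun k _ => by simp only [hm, hu]; ring
    have h3 : ∑ i, m i ^ 2
        = (1/2) * (∑ i, w i ^ 2) + (1/2) * (∑ i, v i ^ 2) - (1/4) * (∑ i, u i ^ 2) := by
      rw [Finset.mul_sum, Finset.mul_sum, Finset.mul_sum, ← Finset.sum_add_distrib,
        ← Finset.sum_sub_distrib]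
      exact Finset.sum_congr rfl fun i _ => by simp only [hm, hu]; ring
    have hkey : g w + g v - 2 * g m
        = (1 / (n:ℝ)^2) * ((lam * (∑ i, u i ^ 2) - ∑ i, ∑ k, u i * u k * ‖z i - z k‖) / 2) := by
      rw [hg w, hg v, hg m]
      rw [h1, h2, h3]
      ring
    rw [hkey]
    have : 0 < (lam * (∑ i, u i ^ 2) - ∑ i, ∑ k, u i * u k * ‖z i - z k‖) / 2 := by
      have := mul_pos hlam hP
      linarith
    positivity
  -- the simplex is compact and nonempty
  set S : Set (Fin n → ℝ) := {w | (∀ i, 0 ≤ w i) ∧ ∑ i, w i = (n:ℝ)} with hS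
  have hclosed : IsClosed S := by
    have : S = (⋂ i, {w : Fin n → ℝ | 0 ≤ w i})
        ∩ ((fun w : Fin n → ℝ => ∑ i, w i) ⁻¹' {(n:ℝ)}) := by
      ext w
      simp [hS, Set.mem_iInter]
    rw [this]
    exact (isClosed_iInter fun i =>
        isClosed_le continuous_const (continuous_apply i)).inter
      (isClosed_singleton.preimage (by fun_prop))
  have hsub : S ⊆ Set.Icc (0 : Fin n → ℝ) (fun _ => (n:ℝ)) := by
    intro w hw
    refine ⟨fun i => hw.1 i, fun i => ?_⟩
    calc w i ≤ ∑ j, w j := Finset.single_le_sum (fun j _ => hw.1 j) (Finset.mem_univ i)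
      _ = (n:ℝ) := hw.2
  have hcomp : IsCompact S := IsCompact.of_isClosed_subset isCompact_Icc hclosed hsub
  have hne : S.Nonempty := by
    refine ⟨fun _ => 1, fun i => zero_le_one, ?_⟩
    simp
  have hgc : Continuous g := by
    have hfun : g = fun w => (2 / (n : ℝ) ^ 2) * ∑ i, ∑ k, w i * ‖z i - y k‖ -
        (1 / (n : ℝ) ^ 2) * ∑ i, ∑ k, w i * w k * ‖z i - z k‖ -
        (1 / (n : ℝ) ^ 2) * ∑ i, ∑ k, ‖y i - y k‖ +
        (lam / (n : ℝ) ^ 2) * ∑ i, (w i) ^ 2 := funext hg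
    rw [hfun]
    fun_prop
  obtain ⟨w, hwS, hwmin⟩ := hcomp.exists_isMinOn hne hgc.continuousOn
  have hwmin' : ∀ x : Fin n → ℝ, (∀ i, 0 ≤ x i) → (∑ i, x i = (n:ℝ)) → g w ≤ g x :=
    fun x h1 h2 => hwmin ⟨h1, h2⟩
  refine ⟨w, ⟨hwS.1, hwS.2, hwmin'⟩, ?_⟩
  rintro v ⟨hv1, hv2, hvmin⟩
  by_contra hne'
  set m : Fin n → ℝ := fun i => (v i + w i) / 2 with hm
  have hm1 : ∀ i, 0 ≤ m i := fun i => by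
    have := hv1 i; have := hwS.1 i; simp only [hm]; linarith
  have hm2 : ∑ i, m i = (n:ℝ) := by
    simp only [hm]
    rw [← Finset.sum_div, Finset.sum_add_distrib, hv2, hwS.2]
    ring
  have hgv : g v ≤ g m := hvmin m hm1 hm2
  have hgw : g w ≤ g m := hwmin' m hm1 hm2
  have := hstrict v w hv2 hwS.2 hne'
  linarith
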